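/- Let O(n) be defined by O(1)=1, O(3)=5, O(3·2^e)=4·2^e for e ≥ 1, and O(n)=0 otherwise. Then for all N ≥ 6, π(N) = Σ_{n≤N} O(n) = (8/3)·2^{−{log_2(N/3)}}·N − 2, where {x} denotes the fractional part of x. -/

import Mathlib

open Classical in
noncomputable def O9 (n : ℕ) : ℕ :=
  if n = 1 then 1
  else if n = 3 then 5
  else if ∃ e : ℕ, 1 ≤ e ∧ n = 3 * 2 ^ e then 4 * 2 ^ padicValNat 2 n
  else 0

noncomputable def pi9 (N : ℕ) : ℕ := ∑ n ∈ Finset.Icc 1 N, O9 n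

lemma O9_one : O9 1 = 1 := by simp [O9]

lemma O9_three : O9 3 = 5 := by simp [O9]

lemma O9_pow (e : ℕ) (he : 1 ≤ e) : O9 (3 * 2 ^ e) = 4 * 2 ^ e := by
  have h1 : (3 : ℕ) * 2 ^ e ≠ 1 := by
    have : 2 ≤ 2 ^ e := by
      calc 2 = 2 ^ 1 := rfl
      _ ≤ 2 ^ e := Nat.pow_le_pow_right (by norm_num) he
    omega
  have h3 : (3 : ℕ) * 2 ^ e ≠ 3 := by
    have : 2 ≤ 2 ^ e := by
      calc 2 = 2 ^ 1 := rfl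
      _ ≤ 2 ^ e := Nat.pow_le_pow_right (by norm_num) he
    omega
  have hval : padicValNat 2 (3 * 2 ^ e) = e := by
    rw [padicValNat.mul (by norm_num) (by positivity)]
    rw [padicValNat.eq_zero_of_not_dvd (by norm_num)]
    simp [padicValNat.prime_pow]
  rw [O9, if_neg h1, if_neg h3, if_pos ⟨e, he, rfl⟩, hval]

lemma geo_sum (L : ℕ) : ∑ e ∈ Finset.Icc 1 L, 4 * 2 ^ e = 8 * 2 ^ L - 8 := by
  induction L with
  | zero => simp
  | succ L ih =>
    rw [Finset.sum_Icc_succ_top (by omega), ih]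
    have h1 : 1 ≤ 2 ^ L := Nat.one_le_two_pow
    rw [pow_succ]
    omega

lemma pi9_eq (N L : ℕ) (hlow : 3 * 2 ^ L ≤ N) (hhigh : N < 3 * 2 ^ (L + 1))
    (hL : 1 ≤ L) : pi9 N = 8 * 2 ^ L - 2 := by
  classical
  set S : Finset ℕ :=
    insert 1 (insert 3 ((Finset.Icc 1 L).image (fun e => 3 * 2 ^ e))) with hS
  have hsub : S ⊆ Finset.Icc 1 N := by
    intro n hn
    simp only [hS, Finset.mem_insert, Finset.mem_image, Finset.mem_Icc] at hn
    rcases hn with rfl | rfl | ⟨e, ⟨he1, he2⟩, rfl⟩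
    · exact Finset.mem_Icc.2 ⟨le_refl 1, by omega⟩
    · exact Finset.mem_Icc.2 ⟨by norm_num, by omega⟩
    · refine Finset.mem_Icc.2 ⟨Nat.one_le_iff_ne_zero.2 (by positivity), ?_⟩
      calc 3 * 2 ^ e ≤ 3 * 2 ^ L := by
            exact Nat.mul_le_mul_left _ (Nat.pow_le_pow_right (by norm_num) he2)
        _ ≤ N := hlow
  have hzero : ∀ n ∈ Finset.Icc 1 N, n ∉ S → O9 n = 0 := by
    intro n hn hnS
    simp only [hS, Finset.mem_insert, Finset.mem_image, Finset.mem_Icc, not_or, not_exists,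
      not_and] at hnS
    obtain ⟨h1, h3, himg⟩ := hnS
    rw [O9, if_neg h1, if_neg h3, if_neg]
    rintro ⟨e, he1, rfl⟩
    have hn' := (Finset.mem_Icc.1 hn).2
    have heL : e ≤ L := by
      by_contra hc
      push_neg at hc
      have : 3 * 2 ^ (L + 1) ≤ 3 * 2 ^ e :=
        Nat.mul_le_mul_left _ (Nat.pow_le_pow_right (by norm_num) hc)
      omega
    exact himg e ⟨he1, heL⟩ rfl
  have hsum : pi9 N = ∑ n ∈ S, O9 n := by
    rw [pi9, ← Finset.sum_subset hsub hzero]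
  rw [hsum, hS]
  have h1notin : (1 : ℕ) ∉ insert 3 ((Finset.Icc 1 L).image (fun e => 3 * 2 ^ e)) := by
    simp only [Finset.mem_insert, Finset.mem_image, Finset.mem_Icc, not_or, not_exists, not_and]
    constructor
    · norm_num
    · intro e ⟨he1, _⟩ h
      have : 2 ≤ 2 ^ e := by
        calc 2 = 2 ^ 1 := rfl
        _ ≤ 2 ^ e := Nat.pow_le_pow_right (by norm_num) he1
      omega
  have h3notin : (3 : ℕ) ∉ (Finset.Icc 1 L).image (fun e => 3 * 2 ^ e) := by
    simp only [Finset.mem_image, Finset.mem_Icc, not_exists, not_and]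
    intro e ⟨he1, _⟩ h
    have : 2 ≤ 2 ^ e := by
      calc 2 = 2 ^ 1 := rfl
      _ ≤ 2 ^ e := Nat.pow_le_pow_right (by norm_num) he1
    omega
  rw [Finset.sum_insert h1notin, Finset.sum_insert h3notin, O9_one, O9_three]
  have hinj : Set.InjOn (fun e => 3 * 2 ^ e) (Finset.Icc 1 L) := by
    intro a _ b _ hab
    simp only at hab
    have : (2 : ℕ) ^ a = 2 ^ b := by omega
    exact Nat.pow_right_injective (by norm_num) this
  rw [Finset.sum_image hinj]
  have : ∑ e ∈ Finset.Icc 1 L, O9 (3 * 2 ^ e) = ∑ e ∈ Finset.Icc 1 L, 4 * 2 ^ e := by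
    apply Finset.sum_congr rfl
    intro e he
    exact O9_pow e (Finset.mem_Icc.1 he).1
  rw [this, geo_sum]
  have h2L : 2 ≤ 2 ^ L := by
    calc 2 = 2 ^ 1 := rfl
    _ ≤ 2 ^ L := Nat.pow_le_pow_right (by norm_num) hL
  omega

theorem exact_orbit_formula_cubert5 (N : ℕ) (hN : 6 ≤ N) :
    (pi9 N : ℝ) = (8 / 3) * (2 : ℝ) ^ (-(Int.fract (Real.logb 2 ((N : ℝ) / 3)))) * N - 2 := by
  set L := Nat.log 2 (N / 3) with hLdef
  have hN3 : 2 ≤ N / 3 := by omega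
  have hlow : 3 * 2 ^ L ≤ N := by
    have := Nat.pow_log_le_self 2 (show N / 3 ≠ 0 by omega)
    have h := (Nat.le_div_iff_mul_le (show 0 < 3 by norm_num)).1 this
    rw [← hLdef] at h
    omega
  have hhigh : N < 3 * 2 ^ (L + 1) := by
    have := Nat.lt_pow_succ_log_self (show 1 < 2 by norm_num) (N / 3)
    have h := (Nat.div_lt_iff_lt_mul (show 0 < 3 by norm_num)).1 this
    rw [← hLdef] at h
    have : 2 ^ (L + 1) = 2 ^ L * 2 := pow_succ 2 L
    omega
  have hL : 1 ≤ L := Nat.le_log_of_pow_le (by norm_num) (by omega)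
  have hNpos : (0 : ℝ) < N := by positivity
  have hx : (0 : ℝ) < (N : ℝ) / 3 := by positivity
  -- floor of logb is L
  have hfloor : ⌊Real.logb 2 ((N : ℝ) / 3)⌋ = (L : ℤ) := by
    rw [Int.floor_eq_iff]
    constructor
    · rw [show ((L : ℤ) : ℝ) = ((L : ℕ) : ℝ) by push_cast; ring]
      rw [Real.le_logb_iff_rpow_le (by norm_num) hx]
      rw [Real.rpow_natCast]
      rw [le_div_iff₀ (by norm_num)]
      calc (2 : ℝ) ^ L * 3 = ((3 * 2 ^ L : ℕ) : ℝ) := by push_cast; ring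
        _ ≤ N := by exact_mod_cast hlow
    · rw [show ((L : ℤ) : ℝ) + 1 = ((L + 1 : ℕ) : ℝ) by push_cast; ring]
      rw [Real.logb_lt_iff_lt_rpow (by norm_num) hx]
      rw [Real.rpow_natCast]
      rw [div_lt_iff₀ (by norm_num)]
      calc (N : ℝ) < ((3 * 2 ^ (L + 1) : ℕ) : ℝ) := by exact_mod_cast hhigh
        _ = 2 ^ (L + 1) * 3 := by push_cast; ring
  have hfract : Int.fract (Real.logb 2 ((N : ℝ) / 3)) =
      Real.logb 2 ((N : ℝ) / 3) - (L : ℝ) := by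
    rw [Int.fract, hfloor]; push_cast; ring
  have hrpow : (2 : ℝ) ^ (-(Int.fract (Real.logb 2 ((N : ℝ) / 3)))) =
      (2 : ℝ) ^ (L : ℕ) / ((N : ℝ) / 3) := by
    rw [hfract, neg_sub, Real.rpow_sub (by norm_num), Real.rpow_logb (by norm_num) (by norm_num) hx]
    rw [Real.rpow_natCast]
  rw [hrpow, pi9_eq N L hlow hhigh hL]
  have h2L : 2 ≤ 2 ^ L := by
    calc 2 = 2 ^ 1 := rfl
    _ ≤ 2 ^ L := Nat.pow_le_pow_right (by norm_num) hL
  have hcast : ((8 * 2 ^ L - 2 : ℕ) : ℝ) = 8 * (2 : ℝ) ^ L - 2 := by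
    have : 2 ≤ 8 * 2 ^ L := by omega
    push_cast [Nat.cast_sub this]
    ring
  rw [hcast]
  field_simp
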